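/- Fix a weight matrix P ∈ ℝ_{>0}^{m×n}. There exist vectors u, w ∈ ℝ_{>0}^m with the following property: defining for each item j ∈ [n] the set S_j = { i ∈ [m] : p_{i,j}/u_i = min_{k∈[m]} p_{k,j}/u_k }, the assignment X̂ given by x̂_{i,j} = w_i / Σ_{i'∈S_j} w_{i'} if i ∈ S_j and x̂_{i,j} = 0 otherwise, is a feasible assignment satisfying max_{i∈[m]} ℓ_i(P,X̂) = ℓ^MKS(P). -/

import Mathlib

open Finset

def Smin {ι : Type} [DecidableEq ι] (σ : ι → ℕ) (s : Finset ι) : Finset ι :=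
  s.filter (fun i => ∀ k ∈ s, σ i ≤ σ k)

lemma Smin_subset {ι : Type} [DecidableEq ι] (σ : ι → ℕ) (s : Finset ι) : Smin σ s ⊆ s :=
  Finset.filter_subset _ _

lemma Smin_nonempty {ι : Type} [DecidableEq ι] (σ : ι → ℕ) {s : Finset ι} (hs : s.Nonempty) :
    (Smin σ s).Nonempty := by
  obtain ⟨i, hi, hmin⟩ := Finset.exists_min_image s σ hs
  exact ⟨i, Finset.mem_filter.mpr ⟨hi, hmin⟩⟩

lemma Smin_zero {ι : Type} [DecidableEq ι] (s : Finset ι) : Smin (fun _ => 0) s = s := by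
  ext i; simp [Smin]

lemma mem_Smin {ι : Type} [DecidableEq ι] {σ : ι → ℕ} {s : Finset ι} {i : ι} :
    i ∈ Smin σ s ↔ i ∈ s ∧ ∀ k ∈ s, σ i ≤ σ k := Finset.mem_filter

lemma sum_subtype_ite {κ : Type} [Fintype κ] (p q : κ → Prop) [DecidablePred p] [DecidablePred q]
    (f : κ → ℝ) :
    ∑ j : {j // p j}, (if q j.1 then f j.1 else 0)
      = ∑ j ∈ univ.filter (fun j => p j ∧ q j), f j := by
  have h1 : ∑ j : {j // p j}, (if q j.1 then f j.1 else 0)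
      = ∑ j ∈ univ.filter p, (if q j then f j else 0) :=
    (Finset.sum_subtype (p := p) (univ.filter p) (by simp) (fun j => if q j then f j else 0)).symm
  rw [h1, ← Finset.sum_filter, Finset.filter_filter]


variable {ι κ : Type} [Fintype ι] [DecidableEq ι] [Fintype κ]

lemma psi_ge [Nonempty ι] (b : ι → ℝ) (y : κ → ℝ) (S : κ → Finset ι)
    (hS : ∀ j, (S j).Nonempty) (hy : ∀ j, 0 < y j)
    (hsum : ∑ j, y j = ∑ i, b i) (γ : ℝ)
    (hslack : ∀ A : Finset ι, A.Nonempty → A ≠ univ →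
      (∑ j ∈ univ.filter (fun j => S j ⊆ A), y j) + γ ≤ ∑ i ∈ A, b i)
    (t : ι → ℝ) :
    γ * (univ.sup' univ_nonempty t - univ.inf' univ_nonempty t)
      ≤ (∑ j, y j * (S j).sup' (hS j) t) - ∑ i, b i * t i := by
  suffices H : ∀ k : ℕ, ∀ t : ι → ℝ,
      (univ.filter (fun i => univ.inf' univ_nonempty t < t i)).card = k →
      γ * (univ.sup' univ_nonempty t - univ.inf' univ_nonempty t)
      ≤ (∑ j, y j * (S j).sup' (hS j) t) - ∑ i, b i * t i from H _ t rfl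
  intro k
  induction k using Nat.strong_induction_on with
  | _ k ih =>
    intro t hk
    set c := univ.inf' univ_nonempty t with hc
    set A := univ.filter (fun i => c < t i) with hAdef
    have hcle : ∀ i, c ≤ t i := fun i => inf'_le _ (mem_univ i)
    have hnotA : ∀ i, i ∉ A → t i = c := by
      intro i hi
      simp only [hAdef, mem_filter, mem_univ, true_and, not_lt] at hi
      exact le_antisymm hi (hcle i)
    by_cases hA : A.Nonempty
    · -- inductive step
      obtain ⟨astar, hastar, hastareq⟩ := Finset.exists_mem_eq_inf' hA t
      have hδpos : 0 < A.inf' hA t - c := by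
        have h1 : c < t astar := (mem_filter.mp hastar).2
        rw [hastareq]; linarith
      set δ := A.inf' hA t - c with hδdef
      have hinfA : ∀ i ∈ A, c + δ ≤ t i := by
        intro i hi
        have h2 : A.inf' hA t ≤ t i := Finset.inf'_le t hi
        rw [hδdef]; linarith
      set t' := fun i => if i ∈ A then t i - δ else t i with ht'def
      have ht'le : ∀ i, c ≤ t' i := by
        intro i
        by_cases h : i ∈ A
        · have := hinfA i h; simp only [ht'def, h, if_pos]; linarith
        · simp only [ht'def, h, if_neg, not_false_iff]; rw [hnotA i h]
      obtain ⟨i₀, _, hi₀⟩ := Finset.exists_mem_eq_inf' (univ_nonempty (α := ι)) t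
      have hi₀A : i₀ ∉ A := by simp [hAdef, ← hc, ← hi₀]
      have ht'i₀ : t' i₀ = c := by
        simp only [ht'def, hi₀A, if_neg, not_false_iff]; rw [hnotA i₀ hi₀A]
      have hinf' : univ.inf' univ_nonempty t' = c := by
        apply le_antisymm
        · rw [← ht'i₀]; exact inf'_le _ (mem_univ i₀)
        · exact le_inf' _ _ (fun i _ => ht'le i)
      have hsup4 : ∀ (s : Finset ι) (hs : s.Nonempty), (s ∩ A).Nonempty →
          s.sup' hs t' = s.sup' hs t - δ := by
        intro s hs hsA
        obtain ⟨a, ha⟩ := hsA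
        have has : a ∈ s := (mem_inter.mp ha).1
        have haA : a ∈ A := (mem_inter.mp ha).2
        obtain ⟨i₁, hi₁s, hi₁⟩ := Finset.exists_mem_eq_sup' hs t
        have hi₁A : i₁ ∈ A := by
          simp only [hAdef, mem_filter, mem_univ, true_and]
          calc c < t a := (mem_filter.mp haA).2
          _ ≤ s.sup' hs t := le_sup' t has
          _ = t i₁ := hi₁
        apply le_antisymm
        · apply sup'_le
          intro i hi
          by_cases h : i ∈ A
          · simp only [ht'def, h, if_pos]
            have := le_sup' t hi
            linarith
          · simp only [ht'def, h, if_neg, not_false_iff]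
            rw [hnotA i h]
            have h1 : c + δ ≤ t a := hinfA a haA
            have h2 : t a ≤ s.sup' hs t := le_sup' t has
            linarith
        · have h3 : s.sup' hs t - δ = t' i₁ := by
            simp only [ht'def, hi₁A, if_pos, ← hi₁]
          rw [h3]
          exact le_sup' t' hi₁s
      have hsupuniv : univ.sup' univ_nonempty t' = univ.sup' univ_nonempty t - δ := by
        apply hsup4
        simpa using hA
      have hA'sub : univ.filter (fun i => univ.inf' univ_nonempty t' < t' i) ⊆ A.erase astar := by
        intro i hi
        rw [hinf'] at hi
        simp only [mem_filter, mem_univ, true_and] at hi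
        have hiA : i ∈ A := by
          by_contra h
          have : t' i = c := by
            simp only [ht'def, h, if_neg, not_false_iff]; rw [hnotA i h]
          rw [this] at hi; exact lt_irrefl _ hi
        refine mem_erase.mpr ⟨?_, hiA⟩
        intro heq
        have hti : t i = c + δ := by rw [heq, hδdef, hastareq]; ring
        have : t' i = c := by simp only [ht'def, hiA, if_pos]; rw [hti]; ring
        rw [this] at hi; exact lt_irrefl _ hi
      have hcard' : (univ.filter (fun i => univ.inf' univ_nonempty t' < t' i)).card < k := by
        calc (univ.filter (fun i => univ.inf' univ_nonempty t' < t' i)).card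
            ≤ (A.erase astar).card := card_le_card hA'sub
          _ < A.card := by
              rw [card_erase_of_mem hastar]
              have : 0 < A.card := card_pos.mpr hA
              omega
          _ = k := hk
      have IH := ih _ hcard' t' rfl
      rw [hinf', hsupuniv] at IH
      -- sum decompositions
      have hbt : ∑ i, b i * t i = (∑ i, b i * t' i) + δ * ∑ i ∈ A, b i := by
        have e1 : ∑ i : ι, b i * t i
            = ∑ i : ι, (b i * t' i + if i ∈ A then δ * b i else 0) := by
          refine Finset.sum_congr rfl fun i _ => ?_
          by_cases h : i ∈ A
          · simp only [ht'def, h, if_pos]; ring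
          · simp only [ht'def, h, if_neg, not_false_iff]; ring
        rw [e1, Finset.sum_add_distrib, Finset.sum_ite_mem, Finset.univ_inter,
          Finset.mul_sum]
      set M := ∑ j ∈ univ.filter (fun j => ((S j) ∩ A).Nonempty), y j with hMdef
      have hyt : ∑ j, y j * (S j).sup' (hS j) t
          = (∑ j, y j * (S j).sup' (hS j) t') + δ * M := by
        have e1 : ∑ j, y j * (S j).sup' (hS j) t
            = ∑ j, (y j * (S j).sup' (hS j) t'
                + if ((S j) ∩ A).Nonempty then δ * y j else 0) := by
          refine Finset.sum_congr rfl fun j _ => ?_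
          by_cases hj : ((S j) ∩ A).Nonempty
          · rw [hsup4 (S j) (hS j) hj, if_pos hj]; ring
          · rw [if_neg hj]
            have : (S j).sup' (hS j) t' = (S j).sup' (hS j) t := by
              refine Finset.sup'_congr (hS j) rfl fun i hi => ?_
              have hiA : i ∉ A := fun hiA => hj ⟨i, mem_inter.mpr ⟨hi, hiA⟩⟩
              simp only [ht'def, hiA, if_neg, not_false_iff]
            rw [this]; ring
        rw [e1, Finset.sum_add_distrib, ← Finset.sum_filter, ← Finset.mul_sum]
      -- slack bound : M ≥ B_A + γ
      have hMB : (∑ i ∈ A, b i) + γ ≤ M := by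
        have hcompl : univ.filter (fun j => ¬ ((S j) ∩ A).Nonempty)
            = univ.filter (fun j => S j ⊆ Aᶜ) := by
          refine Finset.filter_congr fun j _ => ?_
          simp only [Finset.not_nonempty_iff_eq_empty, eq_iff_iff]
          constructor
          · intro h i hi
            simp only [Finset.mem_compl]
            intro hiA
            have : i ∈ S j ∩ A := mem_inter.mpr ⟨hi, hiA⟩
            rw [h] at this; exact absurd this (Finset.notMem_empty i)
          · intro h
            rw [Finset.eq_empty_iff_forall_notMem]
            intro i hi
            have h1 := (mem_inter.mp hi).1
            have h2 := (mem_inter.mp hi).2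
            have := h h1
            rw [Finset.mem_compl] at this
            exact this h2
        have hsplit : M + ∑ j ∈ univ.filter (fun j => S j ⊆ Aᶜ), y j = ∑ j, y j := by
          rw [← hcompl, hMdef]
          exact Finset.sum_filter_add_sum_filter_not univ _ y
        have hAcne : (Aᶜ : Finset ι).Nonempty := ⟨i₀, Finset.mem_compl.mpr hi₀A⟩
        have hAcnuniv : (Aᶜ : Finset ι) ≠ univ := by
          intro h
          have : astar ∈ (Aᶜ : Finset ι) := h ▸ mem_univ astar
          rw [Finset.mem_compl] at this
          exact this hastar
        have hsl := hslack Aᶜ hAcne hAcnuniv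
        have hbsplit : (∑ i ∈ Aᶜ, b i) + ∑ i ∈ A, b i = ∑ i, b i :=
          Finset.sum_compl_add_sum A b
        linarith [hsum]
      have hδγ : δ * ((∑ i ∈ A, b i) + γ) ≤ δ * M :=
        mul_le_mul_of_nonneg_left hMB (le_of_lt hδpos)
      nlinarith [IH, hbt, hyt, hδγ, hδpos]
    · -- all values equal c
      have hall : ∀ i, t i = c := by
        intro i
        by_contra h
        exact hA ⟨i, by simp [hAdef, lt_of_le_of_ne (hcle i) (Ne.symm h)]⟩
      have h1 : univ.sup' univ_nonempty t = c := by
        apply le_antisymm (sup'_le _ _ fun i _ => (hall i).le)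
        obtain ⟨i, hi, he⟩ := Finset.exists_mem_eq_sup' (univ_nonempty (α := ι)) t
        rw [he, hall i]
      have h2 : ∀ j, (S j).sup' (hS j) t = c := by
        intro j
        apply le_antisymm (sup'_le _ _ fun i _ => (hall i).le)
        obtain ⟨i, hi⟩ := hS j
        calc c = t i := (hall i).symm
        _ ≤ _ := le_sup' t hi
      rw [h1]
      have hb : ∑ i, b i * t i = (∑ i, b i) * c := by
        rw [Finset.sum_mul]; exact Finset.sum_congr rfl fun i _ => by rw [hall i]
      simp only [h2, hb]
      rw [← Finset.sum_mul, hsum]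
      ring_nf
      simp

lemma base_equilibrium [Nonempty ι] (b : ι → ℝ) (y : κ → ℝ) (S : κ → Finset ι)
    (hb : ∀ i, 0 < b i) (hy : ∀ j, 0 < y j) (hS : ∀ j, (S j).Nonempty)
    (hsum : ∑ j, y j = ∑ i, b i) (γ : ℝ) (hγ : 0 < γ)
    (hslack : ∀ A : Finset ι, A.Nonempty → A ≠ univ →
      (∑ j ∈ univ.filter (fun j => S j ⊆ A), y j) + γ ≤ ∑ i ∈ A, b i) :
    ∃ w : ι → ℝ, (∀ i, 0 < w i) ∧
      ∀ i, ∑ j, (if i ∈ S j then y j * (w i / ∑ i' ∈ S j, w i') else 0) = b i := by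
  classical
  set Φ : (ι → ℝ) → ℝ := fun t =>
    (∑ j, y j * Real.log (∑ i ∈ S j, Real.exp (t i))) - ∑ i, b i * t i with hΦdef
  have hWpos : ∀ (j : κ) (t : ι → ℝ), 0 < ∑ i ∈ S j, Real.exp (t i) :=
    fun j t => Finset.sum_pos (fun i _ => Real.exp_pos _) (hS j)
  -- Φ dominates ψ
  have hΦψ : ∀ t : ι → ℝ, γ * (univ.sup' univ_nonempty t - univ.inf' univ_nonempty t) ≤ Φ t := by
    intro t
    refine le_trans (psi_ge b y S hS hy hsum γ hslack t) ?_
    simp only [hΦdef]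
    apply sub_le_sub_right
    apply Finset.sum_le_sum
    intro j _
    apply mul_le_mul_of_nonneg_left _ (hy j).le
    obtain ⟨i, hi, he⟩ := Finset.exists_mem_eq_sup' (hS j) t
    rw [he, ← Real.log_exp (t i)]
    apply Real.log_le_log (Real.exp_pos _)
    exact Finset.single_le_sum (fun i _ => (Real.exp_pos (t i)).le) hi
  have hΦcont : Continuous Φ := by
    apply Continuous.sub
    · apply continuous_finset_sum
      intro j _
      apply Continuous.mul continuous_const
      apply Continuous.log
      · exact continuous_finset_sum _ (fun i _ => Real.continuous_exp.comp (continuous_apply i))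
      · intro t; exact (hWpos j t).ne'
    · exact continuous_finset_sum _ (fun i _ => continuous_const.mul (continuous_apply i))
  set c0 := Φ 0 with hc0
  set R : ℝ := |c0| / γ + 1 with hR
  have hRpos : 0 < R := by positivity
  have hbsum : 0 < ∑ i, b i := Finset.sum_pos (fun i _ => hb i) univ_nonempty
  -- key bound on the hyperplane
  have hbound : ∀ t : ι → ℝ, (∑ i, b i * t i = 0) → Φ t ≤ c0 → ∀ i, |t i| ≤ |c0| / γ := by
    intro t ht hΦt i
    set sup := univ.sup' univ_nonempty t with hsup
    set inf := univ.inf' univ_nonempty t with hinf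
    have h1 : γ * (sup - inf) ≤ Φ t := hΦψ t
    have hsi : sup - inf ≤ |c0| / γ := by
      rw [le_div_iff₀ hγ]
      have : Φ t ≤ |c0| := le_trans hΦt (le_abs_self c0)
      nlinarith
    have hsup0 : 0 ≤ sup := by
      by_contra h
      push_neg at h
      have : ∀ i ∈ (univ : Finset ι), b i * t i < 0 := by
        intro i _
        have h1 : t i ≤ sup := le_sup' t (mem_univ i)
        have := hb i
        nlinarith
      have := Finset.sum_lt_sum_of_nonempty univ_nonempty this
      simp only [Finset.sum_const_zero] at this
      rw [ht] at this
      exact lt_irrefl _ this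
    have hinf0 : inf ≤ 0 := by
      by_contra h
      push_neg at h
      have : ∀ i ∈ (univ : Finset ι), (0:ℝ) < b i * t i := by
        intro i _
        have h1 : inf ≤ t i := inf'_le t (mem_univ i)
        have := hb i
        nlinarith
      have := Finset.sum_lt_sum_of_nonempty univ_nonempty this
      simp only [Finset.sum_const_zero] at this
      rw [ht] at this
      exact lt_irrefl _ this
    have h2 : t i ≤ sup := le_sup' t (mem_univ i)
    have h3 : inf ≤ t i := inf'_le t (mem_univ i)
    rw [abs_le]
    constructor <;> nlinarith
  -- compact set
  set K : Set (ι → ℝ) := (Set.univ.pi fun _ : ι => Set.Icc (-R) R) ∩ {t | ∑ i, b i * t i = 0}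
    with hK
  have hKcompact : IsCompact K := by
    apply IsCompact.inter_right
    · exact isCompact_univ_pi (fun i => isCompact_Icc)
    · exact isClosed_eq (continuous_finset_sum _ (fun i _ => continuous_const.mul (continuous_apply i))) continuous_const
  have h0K : (0 : ι → ℝ) ∈ K := by
    constructor
    · intro i _
      simp only [Pi.zero_apply, Set.mem_Icc]
      constructor <;> linarith
    · simp
  obtain ⟨tstar, htK, hmin⟩ := hKcompact.exists_isMinOn ⟨0, h0K⟩ hΦcont.continuousOn
  -- Φ tstar ≤ c0 (since 0 ∈ K)
  have htstarc0 : Φ tstar ≤ c0 := hmin h0K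
  -- shift invariance and global minimality
  have hshift : ∀ (t : ι → ℝ) (s : ℝ), Φ (fun i => t i - s) = Φ t := by
    intro t s
    simp only [hΦdef]
    have h1 : ∀ j : κ, Real.log (∑ i ∈ S j, Real.exp (t i - s))
        = Real.log (∑ i ∈ S j, Real.exp (t i)) - s := by
      intro j
      have : (∑ i ∈ S j, Real.exp (t i - s)) = (∑ i ∈ S j, Real.exp (t i)) * Real.exp (-s) := by
        rw [Finset.sum_mul]
        refine Finset.sum_congr rfl fun i _ => ?_
        rw [← Real.exp_add]; ring_nf
      rw [this, Real.log_mul (hWpos j t).ne' (Real.exp_pos _).ne', Real.log_exp]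
      ring
    have h2 : ∑ i, b i * (t i - s) = (∑ i, b i * t i) - s * ∑ i, b i := by
      rw [Finset.mul_sum, ← Finset.sum_sub_distrib]
      refine Finset.sum_congr rfl fun i _ => by ring
    have h3 : ∑ j, y j * (Real.log (∑ i ∈ S j, Real.exp (t i)) - s)
        = (∑ j, y j * Real.log (∑ i ∈ S j, Real.exp (t i))) - s * ∑ j, y j := by
      rw [Finset.mul_sum, ← Finset.sum_sub_distrib]
      refine Finset.sum_congr rfl fun j _ => by ring
    simp only [h1]
    rw [h3, h2, hsum]
    ring
  have hglob : ∀ t : ι → ℝ, Φ tstar ≤ Φ t := by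
    intro t
    set s := (∑ i, b i * t i) / (∑ i, b i) with hs
    set tbar := fun i => t i - s with htbar
    have h1 : Φ tbar = Φ t := hshift t s
    have h2 : ∑ i, b i * tbar i = 0 := by
      simp only [htbar]
      have : ∑ i, b i * (t i - s) = (∑ i, b i * t i) - s * ∑ i, b i := by
        rw [Finset.mul_sum, ← Finset.sum_sub_distrib]
        refine Finset.sum_congr rfl fun i _ => by ring
      rw [this, hs]
      field_simp
      ring
    by_cases h3 : Φ tbar ≤ c0
    · have htbarK : tbar ∈ K := by
        constructor
        · intro i _
          have h4 := hbound tbar h2 h3 i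
          rw [abs_le] at h4
          refine Set.mem_Icc.mpr ⟨?_, ?_⟩
          · rw [hR]; linarith [h4.1]
          · rw [hR]; linarith [h4.2]
        · exact h2
      calc Φ tstar ≤ Φ tbar := hmin htbarK
        _ = Φ t := h1
    · push_neg at h3
      calc Φ tstar ≤ c0 := htstarc0
        _ ≤ Φ tbar := h3.le
        _ = Φ t := h1
  -- critical point: partial derivatives vanish
  set w : ι → ℝ := fun i => Real.exp (tstar i) with hw
  have hwpos : ∀ i, 0 < w i := fun i => Real.exp_pos _
  refine ⟨w, hwpos, ?_⟩
  intro i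
  set E : κ → ℝ := fun j => ∑ i' ∈ (S j).erase i, Real.exp (tstar i') with hE
  have hEnonneg : ∀ j, 0 ≤ E j :=
    fun j => Finset.sum_nonneg (fun i' _ => (Real.exp_pos _).le)
  set g : ℝ → ℝ := fun s =>
    (∑ j, y j * Real.log ((if i ∈ S j then Real.exp s else 0) + E j)) - (b i * s) with hg
  have hgΦ : ∀ s, g s = Φ (Function.update tstar i s)
      + ∑ i' ∈ univ.erase i, b i' * tstar i' := by
    intro s
    simp only [hg, hΦdef]
    have h1 : ∀ j, (∑ i' ∈ S j, Real.exp (Function.update tstar i s i'))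
        = (if i ∈ S j then Real.exp s else 0) + E j := by
      intro j
      by_cases h : i ∈ S j
      · rw [if_pos h, ← Finset.add_sum_erase _ _ h, Function.update_self]
        congr 1
        refine Finset.sum_congr rfl fun i' hi' => ?_
        rw [Function.update_of_ne (Finset.ne_of_mem_erase hi')]
      · have hEj : E j = ∑ i' ∈ S j, Real.exp (tstar i') := by
          simp only [hE]
          rw [Finset.erase_eq_of_notMem h]
        rw [if_neg h, zero_add, hEj]
        refine Finset.sum_congr rfl fun i' hi' => ?_
        have : i' ≠ i := fun he => h (he ▸ hi')
        rw [Function.update_of_ne this]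
    have h2 : ∑ i', b i' * Function.update tstar i s i'
        = b i * s + ∑ i' ∈ univ.erase i, b i' * tstar i' := by
      rw [← Finset.add_sum_erase _ _ (mem_univ i), Function.update_self]
      congr 1
      refine Finset.sum_congr rfl fun i' hi' => ?_
      rw [Function.update_of_ne (Finset.ne_of_mem_erase hi')]
    simp only [h1, h2]
    ring
  have hgmin : ∀ s, g (tstar i) ≤ g s := by
    intro s
    have h1 := hglob (Function.update tstar i s)
    have h2 : Function.update tstar i (tstar i) = tstar := Function.update_eq_self i tstar
    rw [hgΦ s, hgΦ (tstar i), h2]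
    linarith
  have hlocmin : IsLocalMin g (tstar i) := Filter.Eventually.of_forall hgmin
  -- derivative of g
  set D : ℝ := (∑ j, (if i ∈ S j then y j * (Real.exp (tstar i) / (Real.exp (tstar i) + E j)) else 0)) - b i with hD
  have hderiv : HasDerivAt g D (tstar i) := by
    apply HasDerivAt.sub
    · apply HasDerivAt.fun_sum
      intro j _
      by_cases h : i ∈ S j
      · simp only [h, if_true]
        have hpos : 0 < Real.exp (tstar i) + E j := by
          have := Real.exp_pos (tstar i); have := hEnonneg j; linarith
        have h1 : HasDerivAt (fun s => Real.exp s + E j) (Real.exp (tstar i)) (tstar i) :=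
          (Real.hasDerivAt_exp (tstar i)).add_const (E j)
        have h2 := (h1.log hpos.ne').const_mul (y j)
        exact h2
      · simp only [h, if_false]
        exact hasDerivAt_const _ _
    · simpa using (hasDerivAt_id (tstar i)).const_mul (b i)
  have hD0 : D = 0 := hlocmin.hasDerivAt_eq_zero hderiv
  -- conclude
  have hWw : ∀ j, i ∈ S j → (∑ i' ∈ S j, w i') = Real.exp (tstar i) + E j := by
    intro j h
    rw [← Finset.add_sum_erase _ _ h]
  have : ∑ j, (if i ∈ S j then y j * (w i / ∑ i' ∈ S j, w i') else 0)
      = ∑ j, (if i ∈ S j then y j * (Real.exp (tstar i) / (Real.exp (tstar i) + E j)) else 0) := by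
    refine Finset.sum_congr rfl fun j _ => ?_
    by_cases h : i ∈ S j
    · rw [if_pos h, if_pos h, hWw j h]
    · rw [if_neg h, if_neg h]
  rw [this]
  have := hD0
  rw [hD] at this
  linarith

lemma EQ : ∀ (N : ℕ) (ι : Type) [Fintype ι] [DecidableEq ι] [Nonempty ι], Fintype.card ι ≤ N →
    ∀ (κ : Type) [Fintype κ] (b : ι → ℝ) (y : κ → ℝ) (S : κ → Finset ι),
    (∀ i, 0 < b i) → (∀ j, 0 < y j) → (∀ j, (S j).Nonempty) →
    (∑ j, y j = ∑ i, b i) →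
    (∀ A : Finset ι, (∑ j ∈ univ.filter (fun j => S j ⊆ A), y j) ≤ ∑ i ∈ A, b i) →
    ∃ (σ : ι → ℕ) (w : ι → ℝ), (∀ i, 0 < w i) ∧
      ∀ i, ∑ j, (if i ∈ Smin σ (S j) then y j * (w i / ∑ i' ∈ Smin σ (S j), w i') else 0) = b i := by
  intro N
  induction N with
  | zero =>
    intro ι _ _ _ hcard
    have := Fintype.card_pos (α := ι)
    omega
  | succ N ih =>
    intro ι _ _ _ hcard κ _ b y S hb hy hS hsum hall
    by_cases htight : ∃ A : Finset ι, A.Nonempty ∧ A ≠ univ ∧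
        (∑ i ∈ A, b i) ≤ ∑ j ∈ univ.filter (fun j => S j ⊆ A), y j
    · -- tight case : decompose
      obtain ⟨A, hAne, hAuniv, htA⟩ := htight
      have heqA : ∑ j ∈ univ.filter (fun j => S j ⊆ A), y j = ∑ i ∈ A, b i :=
        le_antisymm (hall A) htA
      obtain ⟨i₂, hi₂⟩ : ∃ i, i ∉ A := by
        by_contra h; push_neg at h; exact hAuniv (Finset.eq_univ_iff_forall.mpr h)
      obtain ⟨i₁, hi₁⟩ := hAne
      haveI : Nonempty {i : ι // i ∈ A} := ⟨⟨i₁, hi₁⟩⟩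
      haveI : Nonempty {i : ι // i ∉ A} := ⟨⟨i₂, hi₂⟩⟩
      have hAcard : 1 ≤ A.card := Finset.card_pos.mpr ⟨i₁, hi₁⟩
      have hAlt : A.card < Fintype.card ι := by
        have := Finset.card_lt_card (Finset.ssubset_univ_iff.mpr hAuniv)
        rwa [Finset.card_univ] at this
      have hcardcoe : Fintype.card {i : ι // i ∈ A} = A.card := Fintype.card_coe A
      have hcard1 : Fintype.card {i : ι // i ∈ A} ≤ N := by omega
      have hcard2 : Fintype.card {i : ι // i ∉ A} ≤ N := by
        have h1 := Fintype.card_subtype_compl (fun i : ι => i ∈ A)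
        rw [hcardcoe] at h1
        rw [h1]
        omega
      set b₁ : {i : ι // i ∈ A} → ℝ := fun i => b i.1 with hb₁def
      set b₂ : {i : ι // i ∉ A} → ℝ := fun i => b i.1 with hb₂def
      set y₁ : {j : κ // S j ⊆ A} → ℝ := fun j => y j.1 with hy₁def
      set y₂ : {j : κ // ¬ S j ⊆ A} → ℝ := fun j => y j.1 with hy₂def
      set S₁ : {j : κ // S j ⊆ A} → Finset {i : ι // i ∈ A} :=
        fun j => (S j.1).subtype (· ∈ A) with hS₁def
      set S₂ : {j : κ // ¬ S j ⊆ A} → Finset {i : ι // i ∉ A} :=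
        fun j => (S j.1).subtype (· ∉ A) with hS₂def
      have hS₁ne : ∀ j, (S₁ j).Nonempty := by
        intro j
        obtain ⟨i, hi⟩ := hS j.1
        exact ⟨⟨i, j.2 hi⟩, Finset.mem_subtype.mpr hi⟩
      have hS₂ne : ∀ j, (S₂ j).Nonempty := by
        intro j
        obtain ⟨i, hi, hiA⟩ := Finset.not_subset.mp j.2
        exact ⟨⟨i, hiA⟩, Finset.mem_subtype.mpr hi⟩
      -- basic sum conversions
      have hsumy₁ : ∑ j : {j : κ // S j ⊆ A}, y₁ j
          = ∑ j ∈ univ.filter (fun j => S j ⊆ A), y j :=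
        (Finset.sum_subtype _ (by simp) y).symm
      have hsumy₂ : ∑ j : {j : κ // ¬ S j ⊆ A}, y₂ j
          = ∑ j ∈ univ.filter (fun j => ¬ S j ⊆ A), y j :=
        (Finset.sum_subtype _ (by simp) y).symm
      have hsumb₁ : ∑ i : {i : ι // i ∈ A}, b₁ i = ∑ i ∈ A, b i :=
        (Finset.sum_subtype _ (fun i => Iff.rfl) b).symm
      have hfiltermem : univ.filter (fun i : ι => i ∈ A) = A := by
        ext i; simp
      have hsumb₂ : ∑ i : {i : ι // i ∉ A}, b₂ i = (∑ i, b i) - ∑ i ∈ A, b i := by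
        have h1 : ∑ i : {i : ι // i ∉ A}, b₂ i
            = ∑ i ∈ univ.filter (fun i => i ∉ A), b i :=
          (Finset.sum_subtype _ (by simp) b).symm
        have h2 := Finset.sum_filter_add_sum_filter_not univ (fun i : ι => i ∈ A) b
        rw [hfiltermem] at h2
        rw [h1]; linarith
      have hsum₁ : ∑ j : {j : κ // S j ⊆ A}, y₁ j = ∑ i : {i : ι // i ∈ A}, b₁ i := by
        rw [hsumy₁, hsumb₁, heqA]
      have hsum₂ : ∑ j : {j : κ // ¬ S j ⊆ A}, y₂ j = ∑ i : {i : ι // i ∉ A}, b₂ i := by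
        have h2 := Finset.sum_filter_add_sum_filter_not univ (fun j : κ => S j ⊆ A) y
        rw [hsumy₂, hsumb₂]
        linarith [hsum, h2, heqA]
      -- Hall for instance 1
      have hall₁ : ∀ A' : Finset {i : ι // i ∈ A},
          (∑ j ∈ univ.filter (fun j => S₁ j ⊆ A'), y₁ j) ≤ ∑ i ∈ A', b₁ i := by
        intro A'
        set A'' := A'.map (Function.Embedding.subtype _) with hA''def
        have hA''sub : A'' ⊆ A := by
          intro i hi
          obtain ⟨a, _, rfl⟩ := Finset.mem_map.mp hi
          exact a.2
        have hiff : ∀ j : {j : κ // S j ⊆ A}, S₁ j ⊆ A' ↔ S j.1 ⊆ A'' := by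
          intro j
          constructor
          · intro h i hi
            have : (⟨i, j.2 hi⟩ : {i : ι // i ∈ A}) ∈ S₁ j := Finset.mem_subtype.mpr hi
            exact Finset.mem_map.mpr ⟨_, h this, rfl⟩
          · intro h a ha
            have h1 : a.1 ∈ S j.1 := Finset.mem_subtype.mp ha
            obtain ⟨a', ha', ha'e⟩ := Finset.mem_map.mp (h h1)
            have : a' = a := Subtype.ext ha'e
            rwa [← this]
        have hcalc : ∑ j ∈ univ.filter (fun j => S₁ j ⊆ A'), y₁ j
            = ∑ j ∈ univ.filter (fun j : κ => S j ⊆ A''), y j := by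
          rw [Finset.sum_filter]
          have : ∀ j : {j : κ // S j ⊆ A},
              (if S₁ j ⊆ A' then y₁ j else 0) = (if S j.1 ⊆ A'' then y j.1 else 0) := by
            intro j
            by_cases h : S₁ j ⊆ A'
            · rw [if_pos h, if_pos ((hiff j).mp h)]
            · rw [if_neg h, if_neg (fun hh => h ((hiff j).mpr hh))]
          rw [Finset.sum_congr rfl (fun j _ => this j)]
          rw [sum_subtype_ite (fun j => S j ⊆ A) (fun j => S j ⊆ A'') y]
          apply Finset.sum_congr _ (fun _ _ => rfl)
          apply Finset.filter_congr
          intro j _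
          exact and_iff_right_of_imp (fun h => h.trans hA''sub)
        rw [hcalc]
        calc ∑ j ∈ univ.filter (fun j : κ => S j ⊆ A''), y j ≤ ∑ i ∈ A'', b i := hall A''
          _ = ∑ i ∈ A', b₁ i := by rw [hA''def, Finset.sum_map]; rfl
      -- Hall for instance 2
      have hall₂ : ∀ B' : Finset {i : ι // i ∉ A},
          (∑ j ∈ univ.filter (fun j => S₂ j ⊆ B'), y₂ j) ≤ ∑ i ∈ B', b₂ i := by
        intro B'
        set B'' := B'.map (Function.Embedding.subtype _) with hB''def
        have hB''nA : ∀ i ∈ B'', i ∉ A := by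
          intro i hi
          obtain ⟨a, _, rfl⟩ := Finset.mem_map.mp hi
          exact a.2
        have hiff : ∀ j : {j : κ // ¬ S j ⊆ A}, S₂ j ⊆ B' ↔ S j.1 ⊆ A ∪ B'' := by
          intro j
          constructor
          · intro h i hi
            by_cases hiA : i ∈ A
            · exact Finset.mem_union_left _ hiA
            · have : (⟨i, hiA⟩ : {i : ι // i ∉ A}) ∈ S₂ j := Finset.mem_subtype.mpr hi
              exact Finset.mem_union_right _ (Finset.mem_map.mpr ⟨_, h this, rfl⟩)
          · intro h a ha
            have h1 : a.1 ∈ S j.1 := Finset.mem_subtype.mp ha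
            have h2 := h h1
            rw [Finset.mem_union] at h2
            rcases h2 with h2 | h2
            · exact absurd h2 a.2
            · obtain ⟨a', ha', ha'e⟩ := Finset.mem_map.mp h2
              have : a' = a := Subtype.ext ha'e
              rwa [← this]
        have hcalc : ∑ j ∈ univ.filter (fun j => S₂ j ⊆ B'), y₂ j
            = ∑ j ∈ univ.filter (fun j : κ => ¬ (S j ⊆ A) ∧ S j ⊆ A ∪ B''), y j := by
          rw [Finset.sum_filter]
          have : ∀ j : {j : κ // ¬ S j ⊆ A},
              (if S₂ j ⊆ B' then y₂ j else 0) = (if S j.1 ⊆ A ∪ B'' then y j.1 else 0) := by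
            intro j
            by_cases h : S₂ j ⊆ B'
            · rw [if_pos h, if_pos ((hiff j).mp h)]
            · rw [if_neg h, if_neg (fun hh => h ((hiff j).mpr hh))]
          rw [Finset.sum_congr rfl (fun j _ => this j)]
          exact sum_subtype_ite (fun j => ¬ S j ⊆ A) (fun j => S j ⊆ A ∪ B'') y
        have hsplit := Finset.sum_filter_add_sum_filter_not
          (univ.filter (fun j : κ => S j ⊆ A ∪ B'')) (fun j => S j ⊆ A) y
        rw [Finset.filter_filter, Finset.filter_filter] at hsplit
        have he1 : univ.filter (fun j : κ => S j ⊆ A ∪ B'' ∧ S j ⊆ A)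
            = univ.filter (fun j : κ => S j ⊆ A) := by
          apply Finset.filter_congr
          intro j _
          exact and_iff_right_of_imp (fun h => h.trans Finset.subset_union_left)
        have he2 : univ.filter (fun j : κ => S j ⊆ A ∪ B'' ∧ ¬ S j ⊆ A)
            = univ.filter (fun j : κ => ¬ (S j ⊆ A) ∧ S j ⊆ A ∪ B'') := by
          apply Finset.filter_congr
          intro j _
          exact and_comm
        rw [he1, he2] at hsplit
        have hdisj : Disjoint A B'' := by
          rw [Finset.disjoint_left]
          exact fun i hi hi' => hB''nA i hi' hi
        have hBsum : ∑ i ∈ A ∪ B'', b i = (∑ i ∈ A, b i) + ∑ i ∈ B'', b i :=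
          Finset.sum_union hdisj
        have hB'eq : ∑ i ∈ B'', b i = ∑ i ∈ B', b₂ i := by
          rw [hB''def, Finset.sum_map]; rfl
        have hhallAB := hall (A ∪ B'')
        rw [hcalc]
        linarith [heqA]
      -- apply induction hypothesis
      obtain ⟨σ₁, w₁, hw₁, heq₁⟩ := ih _ hcard1 _ b₁ y₁ S₁
        (fun i => hb i.1) (fun j => hy j.1) hS₁ne hsum₁ hall₁
      obtain ⟨σ₂, w₂, hw₂, heq₂⟩ := ih _ hcard2 _ b₂ y₂ S₂
        (fun i => hb i.1) (fun j => hy j.1) hS₂ne hsum₂ hall₂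
      set M2 : ℕ := univ.sup σ₂ with hM2
      have hσ₂le : ∀ i2 : {i : ι // i ∉ A}, σ₂ i2 ≤ M2 := fun i2 => Finset.le_sup (mem_univ i2)
      set σ : ι → ℕ := fun i => if h : i ∈ A then σ₁ ⟨i, h⟩ + (M2 + 1) else σ₂ ⟨i, h⟩ with hσdef
      set w : ι → ℝ := fun i => if h : i ∈ A then w₁ ⟨i, h⟩ else w₂ ⟨i, h⟩ with hwdef
      have hσin : ∀ (i : ι) (h : i ∈ A), σ i = σ₁ ⟨i, h⟩ + (M2 + 1) := fun i h => dif_pos h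
      have hσout : ∀ (i : ι) (h : i ∉ A), σ i = σ₂ ⟨i, h⟩ := fun i h => dif_neg h
      have hwin : ∀ (i : ι) (h : i ∈ A), w i = w₁ ⟨i, h⟩ := fun i h => dif_pos h
      have hwout : ∀ (i : ι) (h : i ∉ A), w i = w₂ ⟨i, h⟩ := fun i h => dif_neg h
      have hwpos : ∀ i, 0 < w i := by
        intro i
        by_cases h : i ∈ A
        · rw [hwin i h]; exact hw₁ _
        · rw [hwout i h]; exact hw₂ _
      -- structure of Smin σ (S j)
      have hmap₁ : ∀ (j : κ) (h : S j ⊆ A),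
          Smin σ (S j) = (Smin σ₁ ((S j).subtype (· ∈ A))).map (Function.Embedding.subtype _) := by
        intro j h
        ext i
        rw [mem_Smin, Finset.mem_map]
        constructor
        · rintro ⟨hiS, hmin⟩
          refine ⟨⟨i, h hiS⟩, ?_, rfl⟩
          rw [mem_Smin]
          refine ⟨Finset.mem_subtype.mpr hiS, ?_⟩
          intro k hk
          have hk1 : k.1 ∈ S j := Finset.mem_subtype.mp hk
          have := hmin k.1 hk1
          rw [hσin i (h hiS), hσin k.1 (h hk1)] at this
          have hke : (⟨k.1, h hk1⟩ : {i : ι // i ∈ A}) = k := Subtype.ext rfl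
          rw [← hke]
          omega
        · rintro ⟨a, ha, rfl⟩
          simp only [Function.Embedding.coe_subtype]
          rw [mem_Smin] at ha
          obtain ⟨haS, hamin⟩ := ha
          have haS' : a.1 ∈ S j := Finset.mem_subtype.mp haS
          refine ⟨haS', ?_⟩
          intro k hk
          rw [hσin a.1 (h haS'), hσin k (h hk)]
          have := hamin ⟨k, h hk⟩ (Finset.mem_subtype.mpr hk)
          have hae : (⟨a.1, h haS'⟩ : {i : ι // i ∈ A}) = a := Subtype.ext rfl
          rw [hae]
          omega
      have hmap₂ : ∀ (j : κ) (h : ¬ S j ⊆ A),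
          Smin σ (S j) = (Smin σ₂ ((S j).subtype (· ∉ A))).map (Function.Embedding.subtype _) := by
        intro j h
        obtain ⟨k0, hk0S, hk0A⟩ := Finset.not_subset.mp h
        ext i
        rw [mem_Smin, Finset.mem_map]
        constructor
        · rintro ⟨hiS, hmin⟩
          have hiA : i ∉ A := by
            intro hiA
            have h1 := hmin k0 hk0S
            rw [hσin i hiA, hσout k0 hk0A] at h1
            have := hσ₂le ⟨k0, hk0A⟩
            omega
          refine ⟨⟨i, hiA⟩, ?_, rfl⟩
          rw [mem_Smin]
          refine ⟨Finset.mem_subtype.mpr hiS, ?_⟩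
          intro k hk
          have hk1 : k.1 ∈ S j := Finset.mem_subtype.mp hk
          have := hmin k.1 hk1
          rw [hσout i hiA, hσout k.1 k.2] at this
          have hke : (⟨k.1, k.2⟩ : {i : ι // i ∉ A}) = k := Subtype.ext rfl
          rw [← hke]
          omega
        · rintro ⟨a, ha, rfl⟩
          simp only [Function.Embedding.coe_subtype]
          rw [mem_Smin] at ha
          obtain ⟨haS, hamin⟩ := ha
          have haS' : a.1 ∈ S j := Finset.mem_subtype.mp haS
          refine ⟨haS', ?_⟩
          intro k hk
          by_cases hkA : k ∈ A
          · rw [hσout a.1 a.2, hσin k hkA]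
            have := hσ₂le a
            have hae : (⟨a.1, a.2⟩ : {i : ι // i ∉ A}) = a := Subtype.ext rfl
            rw [hae]
            omega
          · rw [hσout a.1 a.2, hσout k hkA]
            have := hamin ⟨k, hkA⟩ (Finset.mem_subtype.mpr hk)
            have hae : (⟨a.1, a.2⟩ : {i : ι // i ∉ A}) = a := Subtype.ext rfl
            rw [hae]
            omega
      refine ⟨σ, w, hwpos, ?_⟩
      intro i
      rw [← Finset.sum_filter_add_sum_filter_not univ (fun j : κ => S j ⊆ A)]
      by_cases hiA : i ∈ A
      · -- second sum vanishes
        have hzero : ∑ j ∈ univ.filter (fun j : κ => ¬ S j ⊆ A),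
            (if i ∈ Smin σ (S j) then y j * (w i / ∑ i' ∈ Smin σ (S j), w i') else 0) = 0 := by
          apply Finset.sum_eq_zero
          intro j hj
          rw [mem_filter] at hj
          rw [if_neg]
          intro hmem
          rw [hmap₂ j hj.2] at hmem
          obtain ⟨a, _, hae⟩ := Finset.mem_map.mp hmem
          exact a.2 (by rw [show a.1 = i from hae]; exact hiA)
        rw [hzero, add_zero]
        -- first sum equals the sub-instance equation
        have hconv : ∑ j ∈ univ.filter (fun j : κ => S j ⊆ A),
            (if i ∈ Smin σ (S j) then y j * (w i / ∑ i' ∈ Smin σ (S j), w i') else 0)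
            = ∑ j : {j : κ // S j ⊆ A},
            (if (⟨i, hiA⟩ : {i : ι // i ∈ A}) ∈ Smin σ₁ (S₁ j) then
              y₁ j * (w₁ ⟨i, hiA⟩ / ∑ i' ∈ Smin σ₁ (S₁ j), w₁ i') else 0) := by
          rw [Finset.sum_subtype (p := fun j : κ => S j ⊆ A) (univ.filter (fun j : κ => S j ⊆ A)) (by simp)
            (fun j => if i ∈ Smin σ (S j) then y j * (w i / ∑ i' ∈ Smin σ (S j), w i') else 0)]
          apply Finset.sum_congr rfl
          intro j _
          rw [hmap₁ j.1 j.2]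
          have hmem : i ∈ (Smin σ₁ ((S j.1).subtype (· ∈ A))).map (Function.Embedding.subtype _)
              ↔ (⟨i, hiA⟩ : {i : ι // i ∈ A}) ∈ Smin σ₁ (S₁ j) := by
            rw [Finset.mem_map]
            constructor
            · rintro ⟨a, ha, hae⟩
              have : a = ⟨i, hiA⟩ := Subtype.ext hae
              rwa [← this]
            · intro hmem
              exact ⟨⟨i, hiA⟩, hmem, rfl⟩
          have hsummap : ∑ i' ∈ (Smin σ₁ ((S j.1).subtype (· ∈ A))).map
              (Function.Embedding.subtype (· ∈ A)), w i' = ∑ i' ∈ Smin σ₁ (S₁ j), w₁ i' := by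
            rw [Finset.sum_map]
            exact Finset.sum_congr rfl (fun a _ => dif_pos a.2)
          by_cases hm : (⟨i, hiA⟩ : {i : ι // i ∈ A}) ∈ Smin σ₁ (S₁ j)
          · rw [if_pos (hmem.mpr hm), if_pos hm, hsummap, hwin i hiA]
          · rw [if_neg (fun hh => hm (hmem.mp hh)), if_neg hm]
        rw [hconv]
        exact heq₁ ⟨i, hiA⟩
      · -- symmetric case
        have hzero : ∑ j ∈ univ.filter (fun j : κ => S j ⊆ A),
            (if i ∈ Smin σ (S j) then y j * (w i / ∑ i' ∈ Smin σ (S j), w i') else 0) = 0 := by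
          apply Finset.sum_eq_zero
          intro j hj
          rw [mem_filter] at hj
          rw [if_neg]
          intro hmem
          rw [hmap₁ j hj.2] at hmem
          obtain ⟨a, _, hae⟩ := Finset.mem_map.mp hmem
          exact hiA (by rw [← show a.1 = i from hae]; exact a.2)
        rw [hzero, zero_add]
        have hconv : ∑ j ∈ univ.filter (fun j : κ => ¬ S j ⊆ A),
            (if i ∈ Smin σ (S j) then y j * (w i / ∑ i' ∈ Smin σ (S j), w i') else 0)
            = ∑ j : {j : κ // ¬ S j ⊆ A},
            (if (⟨i, hiA⟩ : {i : ι // i ∉ A}) ∈ Smin σ₂ (S₂ j) then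
              y₂ j * (w₂ ⟨i, hiA⟩ / ∑ i' ∈ Smin σ₂ (S₂ j), w₂ i') else 0) := by
          rw [Finset.sum_subtype (p := fun j : κ => ¬ S j ⊆ A) (univ.filter (fun j : κ => ¬ S j ⊆ A)) (by simp)
            (fun j => if i ∈ Smin σ (S j) then y j * (w i / ∑ i' ∈ Smin σ (S j), w i') else 0)]
          apply Finset.sum_congr rfl
          intro j _
          rw [hmap₂ j.1 j.2]
          have hmem : i ∈ (Smin σ₂ ((S j.1).subtype (· ∉ A))).map (Function.Embedding.subtype _)
              ↔ (⟨i, hiA⟩ : {i : ι // i ∉ A}) ∈ Smin σ₂ (S₂ j) := by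
            rw [Finset.mem_map]
            constructor
            · rintro ⟨a, ha, hae⟩
              have : a = ⟨i, hiA⟩ := Subtype.ext hae
              rwa [← this]
            · intro hmem
              exact ⟨⟨i, hiA⟩, hmem, rfl⟩
          have hsummap : ∑ i' ∈ (Smin σ₂ ((S j.1).subtype (· ∉ A))).map
              (Function.Embedding.subtype (· ∉ A)), w i' = ∑ i' ∈ Smin σ₂ (S₂ j), w₂ i' := by
            rw [Finset.sum_map]
            exact Finset.sum_congr rfl (fun a _ => dif_neg a.2)
          by_cases hm : (⟨i, hiA⟩ : {i : ι // i ∉ A}) ∈ Smin σ₂ (S₂ j)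
          · rw [if_pos (hmem.mpr hm), if_pos hm, hsummap, hwout i hiA]
          · rw [if_neg (fun hh => hm (hmem.mp hh)), if_neg hm]
        rw [hconv]
        exact heq₂ ⟨i, hiA⟩
    · -- strict slack : base case
      push_neg at htight
      set Ps : Finset (Finset ι) := univ.powerset.filter (fun B => B.Nonempty ∧ B ≠ univ) with hPsdef
      have hgam : ∃ γ : ℝ, 0 < γ ∧ ∀ B : Finset ι, B.Nonempty → B ≠ univ →
          (∑ j ∈ univ.filter (fun j => S j ⊆ B), y j) + γ ≤ ∑ i ∈ B, b i := by
        by_cases hPsne : Ps.Nonempty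
        · refine ⟨Ps.inf' hPsne
            (fun B => (∑ i ∈ B, b i) - ∑ j ∈ univ.filter (fun j => S j ⊆ B), y j), ?_, ?_⟩
          · rw [Finset.lt_inf'_iff]
            intro B hB
            rw [hPsdef, mem_filter] at hB
            have := htight B hB.2.1 hB.2.2
            linarith
          · intro B h1 h2
            have hmem : B ∈ Ps := by
              rw [hPsdef]; exact mem_filter.mpr ⟨mem_powerset.mpr (subset_univ B), h1, h2⟩
            have := Finset.inf'_le
              (f := fun B => (∑ i ∈ B, b i) - ∑ j ∈ univ.filter (fun j => S j ⊆ B), y j) hmem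
            linarith
        · refine ⟨1, one_pos, ?_⟩
          intro B h1 h2
          exfalso
          apply hPsne
          exact ⟨B, by rw [hPsdef]; exact mem_filter.mpr ⟨mem_powerset.mpr (subset_univ B), h1, h2⟩⟩
      obtain ⟨γ, hγ, hslack⟩ := hgam
      obtain ⟨w, hwpos, heqw⟩ := base_equilibrium b y S hb hy hS hsum γ hγ hslack
      refine ⟨fun _ => 0, w, hwpos, ?_⟩
      intro i
      simp only [Smin_zero]
      exact heqw i



/-- A feasible (fractional) assignment: entries in `[0,1]`, each item fully allocated. -/
def Feasible {m n : ℕ} (X : Fin m → Fin n → ℝ) : Prop :=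
  (∀ i j, 0 ≤ X i j ∧ X i j ≤ 1) ∧ ∀ j, ∑ i, X i j = 1

/-- Load of agent `i` under the assignment `X`. -/
noncomputable def loadX {m n : ℕ} (P X : Fin m → Fin n → ℝ) (i : Fin m) : ℝ :=
  ∑ j, X i j * P i j

/-- Optimal makespan (MinMax objective). -/
noncomputable def MKS {m n : ℕ} (P : Fin m → Fin n → ℝ) : ℝ :=
  sInf { t | ∃ X, Feasible X ∧ t = ⨆ i, loadX P X i }

/-- Optimal Santa Claus value (MaxMin objective). -/
noncomputable def SNT {m n : ℕ} (P : Fin m → Fin n → ℝ) : ℝ :=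
  sSup { t | ∃ X, Feasible X ∧ t = ⨅ i, loadX P X i }

open Classical in
/-- Proportional allocation on the restricted sets
`S j = {i | p_{i,j}/u_i = min_k p_{k,j}/u_k}` with weights `w`. -/
noncomputable def propX {m n : ℕ} (P : Fin m → Fin n → ℝ) (u w : Fin m → ℝ)
    (i : Fin m) (j : Fin n) : ℝ :=
  if ∀ k, P i j / u i ≤ P k j / u k then
    w i / ∑ i' ∈ Finset.univ.filter (fun i' => ∀ k, P i' j / u i' ≤ P k j / u k), w i'
  else 0

theorem stmt17 {m n : ℕ} (hm : 0 < m) (P : Fin m → Fin n → ℝ)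
    (hP : ∀ i j, 0 < P i j) :
    ∃ u w : Fin m → ℝ, (∀ i, 0 < u i) ∧ (∀ i, 0 < w i) ∧
      Feasible (propX P u w) ∧ (⨆ i, loadX P (propX P u w) i) = MKS P := by
  haveI : Nonempty (Fin m) := Fin.pos_iff_nonempty.mp hm
  rcases Nat.eq_zero_or_pos n with hn | hn
  · -- trivial case: no items
    subst hn
    refine ⟨fun _ => 1, fun _ => 1, fun _ => one_pos, fun _ => one_pos, ?_, ?_⟩
    · exact ⟨fun i j => j.elim0, fun j => j.elim0⟩
    · have hload : ∀ (X : Fin m → Fin 0 → ℝ) (i : Fin m), loadX P X i = 0 := by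
        intro X i; rw [loadX]; exact Finset.sum_of_isEmpty _
      have hset : { t | ∃ X, Feasible X ∧ t = ⨆ i, loadX P X i } = {0} := by
        ext t
        simp only [Set.mem_setOf_eq, Set.mem_singleton_iff]
        constructor
        · rintro ⟨X, _, rfl⟩
          simp only [hload]
          exact ciSup_const
        · intro ht
          refine ⟨fun _ _ => 0, ⟨fun i j => j.elim0, fun j => j.elim0⟩, ?_⟩
          simp only [hload, ht]
          exact ciSup_const.symm
      rw [MKS, hset, csInf_singleton]
      simp only [hload]
      exact ciSup_const
  · haveI : Nonempty (Fin n) := Fin.pos_iff_nonempty.mp hn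
    -- maximize the dual over the simplex
    set Δ : Set (Fin m → ℝ) := (Set.univ.pi fun _ : Fin m => Set.Icc (0:ℝ) 1)
      ∩ {z | ∑ i, z i = 1} with hΔdef
    set G : (Fin m → ℝ) → ℝ :=
      fun z => ∑ j, univ.inf' univ_nonempty (fun i => z i * P i j) with hGdef
    have hΔcompact : IsCompact Δ := by
      apply IsCompact.inter_right
      · exact isCompact_univ_pi (fun i => isCompact_Icc)
      · exact isClosed_eq (continuous_finset_sum _ (fun i _ => continuous_apply i))
          continuous_const
    have hGcont : Continuous G := by
      apply continuous_finset_sum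
      intro j _
      have := Continuous.finset_inf' (f := fun (i : Fin m) (z : Fin m → ℝ) => z i * P i j)
        (univ_nonempty) (fun i _ => (continuous_apply i).mul continuous_const)
      convert this using 1
      funext z
      rw [Finset.inf'_apply]
    -- the uniform point
    have hz0mem : (fun _ : Fin m => (m : ℝ)⁻¹) ∈ Δ := by
      constructor
      · intro i _
        constructor
        · positivity
        · rw [inv_le_one_iff₀]
          right
          exact_mod_cast hm
      · simp only [Set.mem_setOf_eq, Finset.sum_const, Finset.card_univ, Fintype.card_fin,
          nsmul_eq_mul]
        field_simp
    have hΔne : Δ.Nonempty := ⟨_, hz0mem⟩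
    obtain ⟨z, hzΔ, hzmax⟩ := hΔcompact.exists_isMaxOn hΔne hGcont.continuousOn
    have hznn : ∀ i, 0 ≤ z i := fun i => ((hzΔ.1 i (Set.mem_univ i)).1)
    have hzsum : ∑ i, z i = 1 := hzΔ.2
    set y : Fin n → ℝ := fun j => univ.inf' univ_nonempty (fun i => z i * P i j) with hydef
    set T : ℝ := ∑ j, y j with hTdef
    have hGz : G z = T := rfl
    have hT0 : 0 < T := by
      have h1 : G (fun _ : Fin m => (m : ℝ)⁻¹) ≤ G z := hzmax hz0mem
      have h2 : 0 < G (fun _ : Fin m => (m : ℝ)⁻¹) := by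
        rw [hGdef]
        apply Finset.sum_pos _ univ_nonempty
        intro j _
        rw [Finset.lt_inf'_iff]
        intro i _
        have : (0:ℝ) < (m : ℝ)⁻¹ := by positivity
        exact mul_pos this (hP i j)
      calc (0:ℝ) < G (fun _ : Fin m => (m : ℝ)⁻¹) := h2
        _ ≤ G z := h1
        _ = T := hGz
    have hz0 : ∀ i, 0 < z i := by
      intro i
      rcases lt_or_eq_of_le (hznn i) with h | h
      · exact h
      · exfalso
        have hyle : ∀ j, y j ≤ 0 := by
          intro j
          have h2 : y j ≤ z i * P i j := Finset.inf'_le (fun i => z i * P i j) (mem_univ i)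
          rw [← h, zero_mul] at h2
          exact h2
        have : T ≤ 0 := Finset.sum_nonpos (fun j _ => hyle j)
        linarith
    have hypos : ∀ j, 0 < y j := by
      intro j
      rw [hydef, Finset.lt_inf'_iff]
      exact fun i _ => mul_pos (hz0 i) (hP i j)
    set S : Fin n → Finset (Fin m) := fun j => univ.filter (fun i => z i * P i j = y j)
      with hSdef
    have hSne : ∀ j, (S j).Nonempty := by
      intro j
      obtain ⟨i, hi, he⟩ := Finset.exists_mem_eq_inf' (univ_nonempty (α := Fin m))
        (fun i => z i * P i j)
      exact ⟨i, mem_filter.mpr ⟨mem_univ i, he.symm⟩⟩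
    have hSeq : ∀ j i, i ∈ S j → z i * P i j = y j := by
      intro j i hi
      exact (mem_filter.mp hi).2
    have hSgt : ∀ j i, i ∉ S j → y j < z i * P i j := by
      intro j i hi
      have h1 : y j ≤ z i * P i j := Finset.inf'_le _ (mem_univ i)
      rcases lt_or_eq_of_le h1 with h | h
      · exact h
      · exact absurd (mem_filter.mpr ⟨mem_univ i, h.symm⟩) hi
    -- Hall condition at the optimum
    have hhall : ∀ A : Finset (Fin m),
        (∑ j ∈ univ.filter (fun j => S j ⊆ A), y j) ≤ ∑ i ∈ A, (T * z i) := by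
      intro A
      by_cases hAuniv : A = univ
      · subst hAuniv
        have h1 : ∑ i ∈ univ, T * z i = T := by rw [← Finset.mul_sum, hzsum, mul_one]
        rw [h1, hTdef]
        apply Finset.sum_le_sum_of_subset_of_nonneg (Finset.filter_subset _ _)
        exact fun j _ _ => (hypos j).le
      by_cases hJ : (univ.filter (fun j => S j ⊆ A)).Nonempty
      swap
      · rw [Finset.not_nonempty_iff_eq_empty] at hJ
        rw [hJ, Finset.sum_empty]
        exact Finset.sum_nonneg (fun i _ => (mul_pos hT0 (hz0 i)).le)
      obtain ⟨i₂, hi₂⟩ : ∃ i, i ∉ A := by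
        by_contra h; push_neg at h; exact hAuniv (Finset.eq_univ_iff_forall.mpr h)
      have hAc : (univ.filter (fun i => i ∉ A)).Nonempty := ⟨i₂, by simp [hi₂]⟩
      set cA : Fin n → ℝ :=
        fun j => (univ.filter (fun i => i ∉ A)).inf' hAc (fun i => z i * P i j) with hcAdef
      have hcgt : ∀ j, S j ⊆ A → y j < cA j := by
        intro j hSA
        rw [hcAdef, Finset.lt_inf'_iff]
        intro i hi
        rw [mem_filter] at hi
        exact hSgt j i (fun hiS => hi.2 (hSA hiS))
      set ε : ℝ :=
        (univ.filter (fun j => S j ⊆ A)).inf' hJ (fun j => (cA j - y j) / y j) with hεdef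
      have hε0 : 0 < ε := by
        rw [hεdef, Finset.lt_inf'_iff]
        intro j hj
        rw [mem_filter] at hj
        have h1 := hcgt j hj.2
        have h2 := hypos j
        apply div_pos <;> linarith
      have hεle : ∀ j, S j ⊆ A → (1 + ε) * y j ≤ cA j := by
        intro j hSA
        have h1 : ε ≤ (cA j - y j) / y j :=
          Finset.inf'_le _ (mem_filter.mpr ⟨mem_univ j, hSA⟩)
        have h2 := hypos j
        rw [le_div_iff₀ h2] at h1
        linarith
      set ZA : ℝ := ∑ i ∈ A, z i with hZAdef
      have hZA0 : 0 ≤ ZA := Finset.sum_nonneg fun i _ => (hznn i)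
      set D : ℝ := 1 + ε * ZA with hDdef
      have hD1 : (1:ℝ) ≤ D := by nlinarith
      have hD0 : (0:ℝ) < D := by linarith
      set z' : Fin m → ℝ := fun i => (if i ∈ A then (1+ε) * z i else z i) / D with hz'def
      have hz'val : ∀ i, 0 ≤ z' i := by
        intro i
        rw [hz'def]
        apply div_nonneg _ hD0.le
        by_cases h : i ∈ A
        · rw [if_pos h]; nlinarith [hznn i]
        · rw [if_neg h]; exact hznn i
      have hsz' : ∑ i, z' i = 1 := by
        have e1 : ∀ i : Fin m, (if i ∈ A then (1+ε) * z i else z i)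
            = z i + (if i ∈ A then ε * z i else 0) := by
          intro i; by_cases h : i ∈ A
          · rw [if_pos h, if_pos h]; ring
          · rw [if_neg h, if_neg h]; ring
        have e2 : ∑ i, (if i ∈ A then (1+ε) * z i else z i) = D := by
          rw [Finset.sum_congr rfl (fun i _ => e1 i), Finset.sum_add_distrib,
            Finset.sum_ite_mem, Finset.univ_inter, ← Finset.mul_sum, hzsum, hDdef, hZAdef]
        rw [hz'def, ← Finset.sum_div, e2, div_self hD0.ne']
      have hz'mem : z' ∈ Δ := by
        refine ⟨?_, hsz'⟩
        intro i _
        refine Set.mem_Icc.mpr ⟨hz'val i, ?_⟩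
        calc z' i ≤ ∑ i', z' i' :=
            Finset.single_le_sum (fun i' _ => hz'val i') (mem_univ i)
          _ = 1 := hsz'
      have hGle : G z' ≤ T := hzmax hz'mem
      have hlow : ∀ j, (if S j ⊆ A then (1+ε) * y j else y j) / D
          ≤ univ.inf' univ_nonempty (fun i => z' i * P i j) := by
        intro j
        rw [Finset.le_inf'_iff]
        intro i _
        have hPij := hP i j
        by_cases hSA : S j ⊆ A
        · rw [if_pos hSA]
          by_cases hiA : i ∈ A
          · have h1 : y j ≤ z i * P i j := Finset.inf'_le _ (mem_univ i)
            have he : z' i * P i j = ((1+ε) * (z i * P i j)) / D := by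
              simp only [hz'def]; rw [if_pos hiA]; ring
            rw [he]
            apply div_le_div_of_nonneg_right _ hD0.le
            nlinarith
          · have h1 : cA j ≤ z i * P i j :=
              Finset.inf'_le _ (mem_filter.mpr ⟨mem_univ i, hiA⟩)
            have he : z' i * P i j = (z i * P i j) / D := by
              simp only [hz'def]; rw [if_neg hiA]; ring
            rw [he]
            apply div_le_div_of_nonneg_right _ hD0.le
            have := hεle j hSA
            linarith
        · rw [if_neg hSA]
          have h1 : y j ≤ z i * P i j := Finset.inf'_le _ (mem_univ i)
          have he : z' i * P i j = ((if i ∈ A then (1+ε) * z i else z i) * P i j) / D := by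
            simp only [hz'def]; ring
          rw [he]
          apply div_le_div_of_nonneg_right _ hD0.le
          by_cases hiA : i ∈ A
          · rw [if_pos hiA]
            nlinarith [mul_nonneg (hznn i) (hP i j).le]
          · rw [if_neg hiA]; exact h1
      have hGz'ge : (T + ε * ∑ j ∈ univ.filter (fun j => S j ⊆ A), y j) / D ≤ G z' := by
        have h1 : ∑ j, (if S j ⊆ A then (1+ε) * y j else y j) / D ≤ G z' := by
          rw [hGdef]
          exact Finset.sum_le_sum (fun j _ => hlow j)
        have e1 : ∀ j : Fin n, (if S j ⊆ A then (1+ε) * y j else y j)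
            = y j + (if S j ⊆ A then ε * y j else 0) := by
          intro j; by_cases h : S j ⊆ A
          · rw [if_pos h, if_pos h]; ring
          · rw [if_neg h, if_neg h]; ring
        have e2 : ∑ j, (if S j ⊆ A then (1+ε) * y j else y j)
            = T + ε * ∑ j ∈ univ.filter (fun j => S j ⊆ A), y j := by
          rw [Finset.sum_congr rfl (fun j _ => e1 j), Finset.sum_add_distrib, ← Finset.sum_filter,
            ← Finset.mul_sum, hTdef]
        rw [← Finset.sum_div, e2] at h1
        exact h1
      have hconc : T + ε * ∑ j ∈ univ.filter (fun j => S j ⊆ A), y j ≤ T * D := by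
        rw [← div_le_iff₀ hD0]
        exact le_trans hGz'ge hGle
      have hTZ : ∑ i ∈ A, T * z i = T * ZA := by rw [hZAdef, Finset.mul_sum]
      rw [hTZ]
      have hexp : T * D = T + T * (ε * ZA) := by rw [hDdef]; ring
      rw [hexp] at hconc
      have h3 : ε * ∑ j ∈ univ.filter (fun j => S j ⊆ A), y j ≤ ε * (T * ZA) := by nlinarith
      exact le_of_mul_le_mul_left (by linarith) hε0
    -- apply the equilibrium lemma
    obtain ⟨σ, w, hwpos, heqw⟩ := EQ m (Fin m) (by rw [Fintype.card_fin]) (Fin n)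
      (fun i => T * z i) y S (fun i => mul_pos hT0 (hz0 i)) hypos hSne
      (by rw [← Finset.mul_sum, hzsum, mul_one])
      hhall
    -- choose scaling exponents
    set Nσ : ℕ := univ.sup σ with hNσ
    have hσle : ∀ i, σ i ≤ Nσ := fun i => Finset.le_sup (mem_univ i)
    have hcex : ∃ cc : ℝ, 0 < cc ∧ ∀ i j, i ∉ S j → (1 + cc * Nσ) * y j < z i * P i j := by
      by_cases hQne : ((univ ×ˢ univ : Finset (Fin m × Fin n)).filter
        (fun p => p.1 ∉ S p.2)).Nonempty
      · set Q := (univ ×ˢ univ : Finset (Fin m × Fin n)).filter (fun p => p.1 ∉ S p.2) with hQ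
        set ρ : ℝ := Q.inf' hQne (fun p => z p.1 * P p.1 p.2 / y p.2) with hρ
        have hρ1 : 1 < ρ := by
          rw [hρ, Finset.lt_inf'_iff]
          intro p hp
          rw [hQ, mem_filter] at hp
          have h1 := hSgt p.2 p.1 hp.2
          rw [lt_div_iff₀ (hypos p.2)]
          linarith
        have hN1 : (0:ℝ) < (Nσ:ℝ) + 1 := by positivity
        refine ⟨(ρ - 1) / ((Nσ:ℝ) + 1), div_pos (by linarith) hN1, ?_⟩
        intro i j hiS
        have hmemQ : (i, j) ∈ Q := by
          rw [hQ, mem_filter]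
          exact ⟨Finset.mem_product.mpr ⟨mem_univ _, mem_univ _⟩, hiS⟩
        have h1 : ρ ≤ z i * P i j / y j := by
          rw [hρ]
          exact Finset.inf'_le _ hmemQ
        rw [le_div_iff₀ (hypos j)] at h1
        have h2 : 1 + (ρ - 1) / ((Nσ:ℝ) + 1) * Nσ < ρ := by
          have hq0 : 0 < (ρ - 1) / ((Nσ:ℝ) + 1) := div_pos (by linarith) hN1
          have hqe : (ρ - 1) / ((Nσ:ℝ) + 1) * ((Nσ:ℝ) + 1) = ρ - 1 := by
            field_simp
          nlinarith
        nlinarith [hypos j]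
      · refine ⟨1, one_pos, ?_⟩
        intro i j hiS
        exfalso
        exact hQne ⟨(i, j), mem_filter.mpr
          ⟨Finset.mem_product.mpr ⟨mem_univ _, mem_univ _⟩, hiS⟩⟩
    obtain ⟨cc, hcc0, hkey⟩ := hcex
    set f : Fin m → ℝ := fun i => 1 + cc * σ i with hfdef
    have hf1 : ∀ i, 1 ≤ f i := by
      intro i
      simp only [hfdef]
      have : (0:ℝ) ≤ cc * σ i := by positivity
      linarith
    have hfle : ∀ i, f i ≤ 1 + cc * Nσ := by
      intro i
      simp only [hfdef]
      have h1 : (σ i : ℝ) ≤ (Nσ : ℝ) := Nat.cast_le.mpr (hσle i)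
      nlinarith
    have hfmono : ∀ i k, σ i ≤ σ k ↔ f i ≤ f k := by
      intro i k
      simp only [hfdef]
      rw [add_le_add_iff_left, mul_le_mul_iff_right₀ hcc0, Nat.cast_le]
    have hfpos : ∀ i, 0 < f i := fun i => lt_of_lt_of_le one_pos (hf1 i)
    set u : Fin m → ℝ := fun i => (z i * f i)⁻¹ with hu
    have hupos : ∀ i, 0 < u i := fun i => inv_pos.mpr (mul_pos (hz0 i) (hfpos i))
    have hPu : ∀ i j, P i j / u i = (z i * P i j) * f i := by
      intro i j
      simp only [hu]
      rw [div_inv_eq_mul]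
      ring
    have hcond : ∀ j i, (∀ k, P i j / u i ≤ P k j / u k) ↔ i ∈ Smin σ (S j) := by
      intro j i
      constructor
      · intro h
        obtain ⟨i0, hi0⟩ := Smin_nonempty σ (hSne j)
        have hi0S : i0 ∈ S j := Smin_subset σ _ hi0
        by_cases hiS : i ∈ S j
        · rw [mem_Smin]
          refine ⟨hiS, ?_⟩
          intro k hk
          have h2 := h k
          rw [hPu, hPu, hSeq j i hiS, hSeq j k hk] at h2
          rw [hfmono]
          exact le_of_mul_le_mul_left h2 (hypos j)
        · exfalso
          have hlt : P i0 j / u i0 < P i j / u i := by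
            rw [hPu, hPu, hSeq j i0 hi0S]
            have h1 : y j * f i0 ≤ y j * (1 + cc * Nσ) :=
              mul_le_mul_of_nonneg_left (hfle i0) (hypos j).le
            have h2 := hkey i j hiS
            have h3 : z i * P i j ≤ (z i * P i j) * f i :=
              le_mul_of_one_le_right (mul_nonneg (hznn i) (hP i j).le) (hf1 i)
            linarith
          exact absurd (h i0) (not_le.mpr hlt)
      · intro h k
        rw [mem_Smin] at h
        obtain ⟨hiS, hmin⟩ := h
        rw [hPu, hPu, hSeq j i hiS]
        by_cases hkS : k ∈ S j
        · rw [hSeq j k hkS]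
          exact mul_le_mul_of_nonneg_left ((hfmono i k).mp (hmin k hkS)) (hypos j).le
        · have h2 := hkey k j hkS
          have h3 : y j * f i ≤ y j * (1 + cc * Nσ) :=
            mul_le_mul_of_nonneg_left (hfle i) (hypos j).le
          have h4 : z k * P k j ≤ (z k * P k j) * f k :=
            le_mul_of_one_le_right (mul_nonneg (hznn k) (hP k j).le) (hf1 k)
          linarith
    have hWpos : ∀ j, 0 < ∑ i' ∈ Smin σ (S j), w i' :=
      fun j => Finset.sum_pos (fun i _ => hwpos i) (Smin_nonempty σ (hSne j))
    have hprop : ∀ i j, propX P u w i j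
        = if i ∈ Smin σ (S j) then w i / (∑ i' ∈ Smin σ (S j), w i') else 0 := by
      intro i j
      rw [propX]
      by_cases h : i ∈ Smin σ (S j)
      · rw [if_pos ((hcond j i).mpr h), if_pos h]
        congr 1
        refine Finset.sum_congr ?_ (fun _ _ => rfl)
        ext i'
        rw [Finset.mem_filter]
        simp only [Finset.mem_univ, true_and]
        exact hcond j i'
      · rw [if_neg (fun hh => h ((hcond j i).mp hh)), if_neg h]
    have hfeas : Feasible (propX P u w) := by
      constructor
      · intro i j
        rw [hprop i j]
        by_cases h : i ∈ Smin σ (S j)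
        · rw [if_pos h]
          constructor
          · exact div_nonneg (hwpos i).le (hWpos j).le
          · rw [div_le_one (hWpos j)]
            exact Finset.single_le_sum (fun k _ => (hwpos k).le) h
        · rw [if_neg h]
          exact ⟨le_refl 0, zero_le_one⟩
      · intro j
        rw [Finset.sum_congr rfl (fun i _ => hprop i j)]
        rw [Finset.sum_ite_mem, Finset.univ_inter, ← Finset.sum_div]
        exact div_self (hWpos j).ne'
    have hload : ∀ i, loadX P (propX P u w) i = T := by
      intro i
      rw [loadX]
      have hterm : ∀ j, propX P u w i j * P i j
          = (if i ∈ Smin σ (S j) then y j * (w i / ∑ i' ∈ Smin σ (S j), w i') else 0)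
            * (z i)⁻¹ := by
        intro j
        rw [hprop i j]
        by_cases h : i ∈ Smin σ (S j)
        · rw [if_pos h, if_pos h]
          have hiS : i ∈ S j := Smin_subset σ _ h
          have hzP := hSeq j i hiS
          have hzi : z i ≠ 0 := (hz0 i).ne'
          have hPe : P i j = y j * (z i)⁻¹ := by
            field_simp
            linarith [hzP]
          rw [hPe]
          ring
        · rw [if_neg h, if_neg h, zero_mul, zero_mul]
      rw [Finset.sum_congr rfl (fun j _ => hterm j), ← Finset.sum_mul, heqw i]
      exact mul_inv_cancel_right₀ (hz0 i).ne' T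
    have hsup : (⨆ i, loadX P (propX P u w) i) = T := by
      simp only [hload]
      exact ciSup_const
    have hlb : ∀ t ∈ { t | ∃ X, Feasible X ∧ t = ⨆ i, loadX P X i }, T ≤ t := by
      rintro t ⟨X, hX, rfl⟩
      have hBdd : BddAbove (Set.range (loadX P X)) := (Set.finite_range _).bddAbove
      have hle : ∀ i, loadX P X i ≤ ⨆ i', loadX P X i' := fun i => le_ciSup hBdd i
      have h1 : T ≤ ∑ i, z i * loadX P X i := by
        have hcol : ∀ j, y j ≤ ∑ i, X i j * (z i * P i j) := by
          intro j
          have h2 : ∀ i, X i j * y j ≤ X i j * (z i * P i j) :=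
            fun i => mul_le_mul_of_nonneg_left (Finset.inf'_le _ (mem_univ i)) (hX.1 i j).1
          calc y j = (∑ i, X i j) * y j := by rw [hX.2 j, one_mul]
            _ = ∑ i, X i j * y j := by rw [Finset.sum_mul]
            _ ≤ ∑ i, X i j * (z i * P i j) := Finset.sum_le_sum (fun i _ => h2 i)
        calc T = ∑ j, y j := hTdef
          _ ≤ ∑ j, ∑ i, X i j * (z i * P i j) := Finset.sum_le_sum (fun j _ => hcol j)
          _ = ∑ i, ∑ j, X i j * (z i * P i j) := Finset.sum_comm
          _ = ∑ i, z i * loadX P X i := by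
              refine Finset.sum_congr rfl fun i _ => ?_
              rw [loadX, Finset.mul_sum]
              exact Finset.sum_congr rfl fun j _ => by ring
      have h2 : ∑ i, z i * loadX P X i ≤ ⨆ i', loadX P X i' := by
        calc ∑ i, z i * loadX P X i ≤ ∑ i, z i * (⨆ i', loadX P X i') :=
            Finset.sum_le_sum (fun i _ => mul_le_mul_of_nonneg_left (hle i) (hznn i))
          _ = (⨆ i', loadX P X i') := by rw [← Finset.sum_mul, hzsum, one_mul]
      linarith
    have hmem : T ∈ { t | ∃ X, Feasible X ∧ t = ⨆ i, loadX P X i } :=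
      ⟨propX P u w, hfeas, hsup.symm⟩
    have hMKS : MKS P = T := by
      rw [MKS]
      apply le_antisymm
      · exact csInf_le ⟨T, hlb⟩ hmem
      · exact le_csInf ⟨T, hmem⟩ hlb
    exact ⟨u, w, hupos, hwpos, hfeas, by rw [hsup, hMKS]⟩
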